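/- Let x : [0,T) → ℝ solve x^{(d+1)}(t) = exp(x(t)) with x(0) = ⋯ = x^{(d)}(0) = 0, and suppose all derivatives x', ..., x^{(d)} are nonnegative on [0,T). If x(t_n) = n for an increasing sequence t_0 = 0 < t_1 < t_2 < ⋯ in [0,T), then t_{n+1} − t_n ≤ ((d+1)!·e^{−n})^{1/(d+1)} for all n. -/

import Mathlib

open Set Filter
open scoped ENNReal

lemma aux_iteratedDerivWithin_eq {f : ℝ → ℝ} {n m : ℕ} (hf : ContDiff ℝ (n : ℕ∞) f)
    (hmn : m ≤ n) {s : Set ℝ} (hs : UniqueDiffOn ℝ s) {y : ℝ} (hy : y ∈ s) :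
    iteratedDerivWithin m f s y = iteratedDeriv m f y := by
  have h := (contDiff_iff_ftaylorSeries.mp hf).hasFTaylorSeriesUpToOn s
  have h2 := h.eq_iteratedFDerivWithin_of_uniqueDiffOn (m := m) (by exact_mod_cast hmn) hs hy
  rw [iteratedDerivWithin_eq_iteratedFDerivWithin, iteratedDeriv_eq_iteratedFDeriv, ← h2]
  rfl

/-- gap bound for the level-crossing times of a solution of
x^{(d+1)} = exp(x) with vanishing initial data and nonnegative derivatives,
on [0,T) where T ∈ (0,∞]. -/
theorem stmt_7 (d : ℕ) (hd : 1 ≤ d) (T : ℝ≥0∞) (hT : 0 < T)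
    (x : ℝ → ℝ) (hx : ContDiff ℝ (d + 1) x)
    (hode : ∀ t : ℝ, 0 ≤ t → ENNReal.ofReal t < T →
      iteratedDeriv (d + 1) x t = Real.exp (x t))
    (hic : ∀ i ≤ d, iteratedDeriv i x 0 = 0)
    (hnonneg : ∀ i, 1 ≤ i → i ≤ d → ∀ t : ℝ, 0 ≤ t → ENNReal.ofReal t < T →
      0 ≤ iteratedDeriv i x t)
    (t : ℕ → ℝ) (ht0 : t 0 = 0) (htmono : StrictMono t)
    (htdom : ∀ n, 0 ≤ t n ∧ ENNReal.ofReal (t n) < T)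
    (hlevel : ∀ n : ℕ, x (t n) = n) :
    ∀ n : ℕ, t (n + 1) - t n ≤
      ((Nat.factorial (d + 1) : ℝ) * Real.exp (-(n : ℝ))) ^
        ((1 : ℝ) / (d + 1)) := by
  intro n
  set a := t n with ha
  set b := t (n + 1) with hb
  have hab : a < b := htmono (Nat.lt_succ_self n)
  have ha0 : 0 ≤ a := (htdom n).1
  have hbT : ENNReal.ofReal b < T := (htdom (n + 1)).2
  -- any point in [0, b] is in the domain
  have hdom : ∀ s : ℝ, 0 ≤ s → s ≤ b → ENNReal.ofReal s < T := fun s _ hsb =>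
    lt_of_le_of_lt (ENNReal.ofReal_le_ofReal hsb) hbT
  have hxcast : ContDiff ℝ ((d + 1 : ℕ) : ℕ∞) x := by exact_mod_cast hx
  -- x is monotone on [0, b]
  have hmono : MonotoneOn x (Icc 0 b) := by
    apply monotoneOn_of_deriv_nonneg (convex_Icc 0 b) hx.continuous.continuousOn
    · exact fun s _ => (hx.differentiable (by simp)).differentiableAt.differentiableWithinAt
    · intro s hs
      rw [interior_Icc, mem_Ioo] at hs
      have h1 := hnonneg 1 le_rfl hd s hs.1.le (hdom s hs.1.le hs.2.le)
      rwa [iteratedDeriv_one] at h1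
  -- Taylor's theorem on [a, b]
  have hcd : ContDiffOn ℝ d x (Icc a b) :=
    (hx.of_le (by exact_mod_cast Nat.le_succ d)).contDiffOn.mono (subset_univ _)
  have hudo : UniqueDiffOn ℝ (Icc a b) := uniqueDiffOn_Icc hab
  have hdg : Differentiable ℝ (iteratedDeriv d x) :=
    hx.differentiable_iteratedDeriv d (by exact_mod_cast Nat.lt_succ_self d)
  have hdiff : DifferentiableOn ℝ (iteratedDerivWithin d x (Icc a b)) (Ioo a b) :=
    DifferentiableOn.congr hdg.differentiableOn (fun y hy =>
      aux_iteratedDerivWithin_eq hxcast (Nat.le_succ d) hudo (Ioo_subset_Icc_self hy))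
  obtain ⟨c, hc, hrem⟩ : ∃ c ∈ Ioo a b, x b - taylorWithinEval x d (Icc a b) a b =
      iteratedDerivWithin (d + 1) x (Icc a b) c * (b - a) ^ (d + 1) / ((d + 1).factorial : ℝ) := by
    have h := taylor_mean_remainder_lagrange (n := d) hab.ne (by rwa [uIcc_of_le hab.le])
      (by rwa [uIcc_of_le hab.le, uIoo_of_lt hab])
    rwa [uIcc_of_le hab.le, uIoo_of_lt hab] at h
  have hca : a ≤ c := hc.1.le
  have hcb : c ≤ b := hc.2.le
  have hc0 : 0 ≤ c := le_trans ha0 hca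
  -- identify the (d+1)-st derivative at c
  have hder : iteratedDerivWithin (d + 1) x (Icc a b) c = Real.exp (x c) := by
    rw [aux_iteratedDerivWithin_eq hxcast le_rfl hudo (Ioo_subset_Icc_self hc)]
    exact hode c hc0 (hdom c hc0 hcb)
  -- x c ≥ n
  have hxc : (n : ℝ) ≤ x c := by
    have := hmono ⟨ha0, le_of_lt hab⟩ ⟨hc0, hcb⟩ hca
    rwa [hlevel n] at this
  -- Taylor polynomial at a evaluated at b is ≥ n
  have htaylor : (n : ℝ) ≤ taylorWithinEval x d (Icc a b) a b := by
    rw [taylor_within_apply]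
    have hmem : a ∈ Icc a b := ⟨le_rfl, hab.le⟩
    rw [Finset.sum_range_succ']
    have h0 : (((Nat.factorial 0 : ℕ) : ℝ)⁻¹ * (b - a) ^ 0) • iteratedDerivWithin 0 x (Icc a b) a
        = (n : ℝ) := by
      simp [ha, hlevel n]
    rw [h0]
    have hsum : 0 ≤ ∑ i ∈ Finset.range d,
        (((Nat.factorial (i + 1) : ℕ) : ℝ)⁻¹ * (b - a) ^ (i + 1)) •
          iteratedDerivWithin (i + 1) x (Icc a b) a := by
      apply Finset.sum_nonneg
      intro i hi
      rw [Finset.mem_range] at hi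
      have hderiv : 0 ≤ iteratedDerivWithin (i + 1) x (Icc a b) a := by
        rw [aux_iteratedDerivWithin_eq hxcast (by omega) hudo hmem]
        exact hnonneg (i + 1) (by omega) (by omega) a ha0 (htdom n).2
      have hcoef : (0:ℝ) ≤ (((i + 1).factorial : ℕ) : ℝ)⁻¹ * (b - a) ^ (i + 1) :=
        mul_nonneg (by positivity) (pow_nonneg (by linarith) _)
      exact smul_nonneg hcoef hderiv
    linarith
  -- combine: 1 ≥ exp(n) * (b-a)^(d+1) / (d+1)!
  have hxb : x b = (n : ℝ) + 1 := by rw [hlevel (n + 1)]; push_cast; ring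
  have hexp : Real.exp (n : ℝ) ≤ Real.exp (x c) := Real.exp_le_exp.mpr hxc
  have hkey : Real.exp (n : ℝ) * (b - a) ^ (d + 1) / ((d + 1).factorial : ℝ) ≤ 1 := by
    have h1 : x b - taylorWithinEval x d (Icc a b) a b ≤ 1 := by
      rw [hxb]; linarith
    rw [hrem, hder] at h1
    have hpow : (0:ℝ) ≤ (b - a) ^ (d + 1) := pow_nonneg (by linarith) _
    have hfac : (0:ℝ) < ((d + 1).factorial : ℝ) := by positivity
    have h2 : Real.exp (n:ℝ) * (b - a) ^ (d + 1) ≤ Real.exp (x c) * (b - a) ^ (d + 1) :=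
      mul_le_mul_of_nonneg_right hexp hpow
    rw [div_le_one hfac] at h1 ⊢
    linarith
  -- hence (b-a)^(d+1) ≤ (d+1)! * exp(-n)
  have hpowle : (b - a) ^ (d + 1) ≤ ((d + 1).factorial : ℝ) * Real.exp (-(n : ℝ)) := by
    have hfac : (0:ℝ) < ((d + 1).factorial : ℝ) := by positivity
    have hepos : (0:ℝ) < Real.exp (n : ℝ) := Real.exp_pos _
    rw [div_le_one hfac] at hkey
    rw [Real.exp_neg, ← div_eq_mul_inv, le_div_iff₀ hepos]
    calc (b - a) ^ (d + 1) * Real.exp (n:ℝ) = Real.exp (n:ℝ) * (b - a) ^ (d + 1) :=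
          mul_comm _ _
      _ ≤ _ := hkey
  -- conclude via rpow
  have hΔ : 0 ≤ b - a := le_of_lt (sub_pos.mpr hab)
  have hd1 : (0:ℝ) < (d:ℝ) + 1 := by positivity
  have heq : ((b - a) ^ (d + 1) : ℝ) ^ ((1:ℝ) / (d + 1)) = b - a := by
    rw [← Real.rpow_natCast (b - a) (d + 1), ← Real.rpow_mul hΔ]
    push_cast
    rw [mul_one_div, div_self (ne_of_gt hd1), Real.rpow_one]
  calc b - a = ((b - a) ^ (d + 1) : ℝ) ^ ((1:ℝ) / (d + 1)) := heq.symm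
    _ ≤ (((d + 1).factorial : ℝ) * Real.exp (-(n : ℝ))) ^ ((1:ℝ) / (d + 1)) :=
        Real.rpow_le_rpow (by positivity) hpowle (by positivity)
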